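/- Let (W, ⟨·,·⟩) be a 2-dimensional Lorentzian vector space, and β : V × V → W a flat symmetric bilinear form on an n-dimensional space V with n ≥ 4 and N(β) = {0}. Then S(β) is degenerate, i.e. S(β) ∩ S(β)^⊥ ≠ {0}. -/

import Mathlib

open Module

-- dim trick
theorem auxTwo {V : Type*} [AddCommGroup V] [Module ℝ V] [FiniteDimensional ℝ V]
    (f g : V →ₗ[ℝ] ℝ) (h : ∀ x, f x = 0 → g x = 0 → x = 0) :
    Module.finrank ℝ V ≤ 2 := by
  have hinj : Function.Injective (f.prod g) := by
    rw [← LinearMap.ker_eq_bot]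
    refine (Submodule.eq_bot_iff _).2 fun x hx => ?_
    simp only [LinearMap.mem_ker, LinearMap.prod_apply, Function.prod, Prod.mk_eq_zero] at hx
    exact h x hx.1 hx.2
  have := LinearMap.finrank_le_finrank_of_injective hinj
  simpa [Module.finrank_prod] using this

-- functional vanishing on a submodule, nonzero on z outside
theorem auxFun {V : Type*} [AddCommGroup V] [Module ℝ V] [FiniteDimensional ℝ V]
    (U : Submodule ℝ V) (z : V) (hz : z ∉ U) :
    ∃ φ : V →ₗ[ℝ] ℝ, (∀ u ∈ U, φ u = 0) ∧ φ z ≠ 0 := by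
  have hz' : U.mkQ z ≠ 0 := by
    simpa [Submodule.Quotient.mk_eq_zero] using hz
  have : ¬ (∀ ψ : Module.Dual ℝ (V ⧸ U), ψ (U.mkQ z) = 0) := by
    rw [Module.forall_dual_apply_eq_zero_iff]; exact hz'
  push_neg at this
  obtain ⟨ψ, hψ⟩ := this
  exact ⟨ψ.comp U.mkQ, fun u hu => by simp [Submodule.Quotient.mk_eq_zero U |>.2 hu, (Submodule.Quotient.mk_eq_zero U).2 hu, show U.mkQ u = 0 by simpa [Submodule.mkQ_apply, Submodule.Quotient.mk_eq_zero]], hψ⟩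

theorem caseOne {V : Type*} [AddCommGroup V] [Module ℝ V] [FiniteDimensional ℝ V]
    (a b : V →ₗ[ℝ] V →ₗ[ℝ] ℝ)
    (ha : ∀ x y, a x y = a y x) (hb : ∀ x y, b x y = b y x)
    (hE : ∀ x z y t, a x y * b z t + b x y * a z t = a x t * b z y + b x t * a z y)
    (hker : ∀ x, (∀ y, a x y = 0) → (∀ y, b x y = 0) → x = 0)
    (hn : 4 ≤ Module.finrank ℝ V)
    (u : V) (hu : u ≠ 0) (hbu : ∀ y, b u y = 0)
    (z₁ t₁ : V) (hbne : b z₁ t₁ ≠ 0) : False := by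
  have hE' : ∀ x z y t, a x y * b z t - a x t * b z y = a z y * b x t - a z t * b x y := by
    intro x z y t; have := hE x z y t; linarith
  have hss : ∀ z y t, a u y * b z t = a u t * b z y := by
    intro z y t
    have := hE' u z y t
    simp [hbu] at this
    linarith
  have hy₁ : ∃ y₁, a u y₁ ≠ 0 := by
    by_contra h
    push_neg at h
    exact hu (hker u h hbu)
  obtain ⟨y₁, hs⟩ := hy₁
  have hD : ∀ z y, a u y₁ * b z y = a u y * b z y₁ := fun z y => (hss z y y₁).symm
  have hk : ∀ z y, a u y₁ * a u y₁ * b z y = b y₁ y₁ * a u z * a u y := by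
    intro z y
    have h1 := hD z y
    have h3 : a u y₁ * b z y₁ = a u z * b y₁ y₁ := by rw [hb z y₁]; exact hD y₁ z
    linear_combination a u y₁ * h1 + a u y * h3
  have hκ : b y₁ y₁ ≠ 0 := by
    intro h0
    have h' := hk z₁ t₁
    rw [h0] at h'
    simp only [zero_mul] at h'
    rcases mul_eq_zero.mp h' with h | h
    · exact (mul_ne_zero hs hs) h
    · exact hbne h
  have hE3 : ∀ x y t, a u y₁ * (a x y * a u t - a x t * a u y)
      = a u x * (a y₁ y * a u t - a y₁ t * a u y) := by
    intro x y t
    have h := hE' x y₁ y t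
    have h1 := hk y₁ t
    have h2 := hk y₁ y
    have h3 := hk x t
    have h4 := hk x y
    have expand : b y₁ y₁ * (a u y₁ * (a x y * a u t - a x t * a u y))
        = b y₁ y₁ * (a u x * (a y₁ y * a u t - a y₁ t * a u y)) := by
      linear_combination (a u y₁ * a u y₁) * h - a x y * h1 + a x t * h2 + a y₁ y * h3 - a y₁ t * h4
    exact mul_left_cancel₀ hκ expand
  have hfr := auxTwo (a u) (a y₁) ?_
  · omega
  · intro x hfx hgx
    apply hker
    · intro y
      have h := hE3 x y y₁
      have hxy₁ : a x y₁ = 0 := by rw [ha x y₁]; exact hgx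
      rw [hfx, hxy₁, zero_mul] at h
      simp only [mul_zero, zero_mul, sub_zero] at h
      rcases mul_eq_zero.mp h with h' | h'
      · exact absurd h' hs
      · rcases mul_eq_zero.mp h' with h'' | h''
        · exact h''
        · exact absurd h'' hs
    · intro y
      have h := hk x y
      rw [hfx] at h
      simp only [mul_zero, zero_mul] at h
      rcases mul_eq_zero.mp h with h' | h'
      · exact absurd h' (mul_ne_zero hs hs)
      · exact h'

theorem caseTwo {V : Type*} [AddCommGroup V] [Module ℝ V] [FiniteDimensional ℝ V]
    (a b : V →ₗ[ℝ] V →ₗ[ℝ] ℝ)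
    (ha : ∀ x y, a x y = a y x)
    (hE : ∀ x z y t, a x y * b z t + b x y * a z t = a x t * b z y + b x t * a z y)
    (hand : ∀ x, (∀ y, a x y = 0) → x = 0)
    (hbnd : ∀ x, (∀ y, b x y = 0) → x = 0)
    (hn : 4 ≤ Module.finrank ℝ V) : False := by
  have hE' : ∀ x z y t, a x y * b z t - a x t * b z y = a z y * b x t - a z t * b x y := by
    intro x z y t; have := hE x z y t; linarith
  have hainj : Function.Injective a := by
    intro x y hxy
    have h0 : ∀ t, a (x - y) t = 0 := by
      intro t; rw [map_sub]; simp [LinearMap.ext_iff.mp hxy t]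
    have := hand _ h0
    rwa [sub_eq_zero] at this
  have hasurj : Function.Surjective a :=
    (LinearMap.injective_iff_surjective_of_finrank_eq_finrank
      (Subspace.dual_finrank_eq).symm).mp hainj
  let ea : V ≃ₗ[ℝ] Module.Dual ℝ V := LinearEquiv.ofBijective a ⟨hainj, hasurj⟩
  let A : V →ₗ[ℝ] V := ea.symm.toLinearMap ∘ₗ b
  have hA : ∀ z, a (A z) = b z := fun z => ea.apply_symm_apply (b z)
  have hA' : ∀ z t, b z t = a t (A z) := by
    intro z t; rw [← hA z, ha]
  have hdag : ∀ (φ ψ : Module.Dual ℝ V) (x z : V),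
      φ x * ψ (A z) - ψ x * φ (A z) = φ z * ψ (A x) - ψ z * φ (A x) := by
    intro φ ψ x z
    obtain ⟨y, hy⟩ := hasurj φ
    obtain ⟨t, ht⟩ := hasurj ψ
    have h := hE' x z y t
    rw [hA' z t, hA' z y, hA' x t, hA' x y] at h
    rw [ha x y, ha x t, ha z y, ha z t] at h
    rw [← hy, ← ht]
    exact h
  -- Step 1 : every vector is an eigenvector of A
  have step1 : ∀ x, ∃ c : ℝ, A x = c • x := by
    intro x
    by_contra hc
    push_neg at hc
    let m : ℝ × ℝ →ₗ[ℝ] V :=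
      (LinearMap.toSpanSingleton ℝ V x).coprod (LinearMap.toSpanSingleton ℝ V (A x))
    have hztop : LinearMap.range m ≠ ⊤ := by
      intro htop
      have h1 := LinearMap.finrank_range_le m
      rw [htop, finrank_top, Module.finrank_prod, Module.finrank_self] at h1
      omega
    obtain ⟨z, hz⟩ : ∃ z, z ∉ LinearMap.range m := by
      by_contra h
      push_neg at h
      exact hztop (LinearMap.range_eq_top.mpr fun v => h v)
    obtain ⟨φ, hφ0, hφz⟩ := auxFun (LinearMap.range m) z hz
    have hφx : φ x = 0 := hφ0 x ⟨(1, 0), by simp [m]⟩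
    have hφAx : φ (A x) = 0 := hφ0 (A x) ⟨(0, 1), by simp [m]⟩
    have key : ∀ ψ : Module.Dual ℝ V, ψ (φ z • A x + φ (A z) • x) = 0 := by
      intro ψ
      have h := hdag φ ψ x z
      rw [hφx, hφAx] at h
      simp only [zero_mul, mul_zero, sub_zero, zero_sub] at h
      simp only [map_add, map_smul, smul_eq_mul]
      linear_combination -h
    have hv : φ z • A x + φ (A z) • x = 0 :=
      (Module.forall_dual_apply_eq_zero_iff ℝ _).mp key
    have h1 : φ z • A x = -(φ (A z) • x) := eq_neg_of_add_eq_zero_left hv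
    apply hc (-(φ (A z) / φ z))
    have h2 : φ z • A x = φ z • ((-(φ (A z) / φ z)) • x) := by
      rw [h1, smul_smul]
      have h3 : φ z * -(φ (A z) / φ z) = -(φ (A z)) := by
        field_simp
      rw [h3, neg_smul]
    exact smul_right_injective V hφz h2
  -- Step 2 : A is globally scalar
  have : Nontrivial V := (Module.finrank_pos_iff (R := ℝ)).mp (by omega)
  obtain ⟨x₀, hx₀⟩ := exists_ne (0 : V)
  obtain ⟨c₀, hc₀⟩ := step1 x₀
  have hAll : ∀ z, A z = c₀ • z := by
    intro z
    obtain ⟨c, hcz⟩ := step1 z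
    by_cases hmem : z ∈ Submodule.span ℝ {x₀}
    · obtain ⟨t, ht⟩ := Submodule.mem_span_singleton.mp hmem
      rw [← ht, map_smul, hc₀]
      exact smul_comm t c₀ x₀
    · obtain ⟨c', hc'⟩ := step1 (x₀ + z)
      rw [map_add, hc₀, hcz, smul_add] at hc'
      have hrel : (c' - c₀) • x₀ = (c - c') • z := by
        rw [sub_smul, sub_smul, sub_eq_sub_iff_add_eq_add, add_comm (c • z) (c₀ • x₀)]
        exact hc'.symm
      have hcc' : c = c' := by
        by_contra hne
        apply hmem
        have hz' : z = (c - c')⁻¹ • ((c' - c₀) • x₀) := by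
          rw [hrel, smul_smul, inv_mul_cancel₀ (sub_ne_zero.mpr hne), one_smul]
        rw [hz']
        exact Submodule.smul_mem _ _ (Submodule.smul_mem _ _ (Submodule.mem_span_singleton_self x₀))
      have hc'c₀ : c' = c₀ := by
        rw [hcc', sub_self, zero_smul] at hrel
        rcases smul_eq_zero.mp hrel with h | h
        · linarith
        · exact absurd h hx₀
      rw [hcz, hcc', hc'c₀]
  -- b = c₀ • a
  have hba : ∀ z y, b z y = c₀ * a z y := by
    intro z y
    rw [hA' z y, hAll z, map_smul, smul_eq_mul, ha y z]
  have hc₀ne : c₀ ≠ 0 := by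
    intro h0
    apply hx₀
    apply hbnd x₀
    intro y
    rw [hba, h0, zero_mul]
  have hrk : ∀ x z y t, a x y * a z t = a x t * a z y := by
    intro x z y t
    have h := hE' x z y t
    simp only [hba] at h
    have h2 : c₀ * (a x y * a z t - a x t * a z y) = c₀ * 0 := by
      rw [mul_zero]; linear_combination h / 2
    have := mul_left_cancel₀ hc₀ne h2
    linarith
  have hx₂ : ∃ x₂ y₂, a x₂ y₂ ≠ 0 := by
    by_contra h; push_neg at h
    exact hx₀ (hand x₀ (h x₀))
  obtain ⟨x₂, y₂, hay⟩ := hx₂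
  have hfr := auxTwo (a y₂) (a y₂) ?_
  · omega
  · intro x hx _
    apply hand
    intro y
    have h := hrk x x₂ y y₂
    have hxy₂ : a x y₂ = 0 := by rw [ha x y₂]; exact hx
    rw [hxy₂, zero_mul] at h
    rcases mul_eq_zero.mp h with h' | h'
    · exact h'
    · exact absurd h' hay

theorem keyLemma {V : Type*} [AddCommGroup V] [Module ℝ V] [FiniteDimensional ℝ V]
    (a b : V →ₗ[ℝ] V →ₗ[ℝ] ℝ)
    (ha : ∀ x y, a x y = a y x) (hb : ∀ x y, b x y = b y x)
    (hE : ∀ x z y t, a x y * b z t + b x y * a z t = a x t * b z y + b x t * a z y)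
    (hker : ∀ x, (∀ y, a x y = 0) → (∀ y, b x y = 0) → x = 0)
    (hn : 4 ≤ Module.finrank ℝ V) :
    (∀ x y, a x y = 0) ∨ (∀ x y, b x y = 0) := by
  by_contra h
  push_neg at h
  obtain ⟨⟨xa, ya, hA⟩, ⟨xb, yb, hB⟩⟩ := h
  by_cases hbker : ∃ u, u ≠ 0 ∧ ∀ y, b u y = 0
  · obtain ⟨u, hu, hbu⟩ := hbker
    exact caseOne a b ha hb hE hker hn u hu hbu xb yb hB
  by_cases haker : ∃ v, v ≠ 0 ∧ ∀ y, a v y = 0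
  · obtain ⟨v, hv, hav⟩ := haker
    exact caseOne b a hb ha (fun x z y t => by linarith [hE x z y t])
      (fun x h1 h2 => hker x h2 h1) hn v hv hav xa ya hA
  · push_neg at hbker haker
    refine caseTwo a b ha hE ?_ ?_ hn
    · intro x hx
      by_contra hx0
      obtain ⟨y, hy⟩ := haker x hx0
      exact hy (hx y)
    · intro x hx
      by_contra hx0
      obtain ⟨y, hy⟩ := hbker x hx0
      exact hy (hx y)

/-- A flat symmetric bilinear form with values in a 2-dimensional Lorentzian
space, on a space of dimension `n ≥ 4`, with trivial nullity, has degenerate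
image subspace. -/
theorem stmt_12 {V W : Type*} [AddCommGroup V] [Module ℝ V] [FiniteDimensional ℝ V]
    [AddCommGroup W] [Module ℝ W] [FiniteDimensional ℝ W]
    (hWdim : Module.finrank ℝ W = 2)
    (B : LinearMap.BilinForm ℝ W) (hBsymm : B.IsSymm)
    (e : Basis (Fin 2) ℝ W)
    (he01 : B (e 0) (e 1) = 0) (he10 : B (e 1) (e 0) = 0)
    (he0 : B (e 0) (e 0) = -1) (he1 : B (e 1) (e 1) = 1)
    (β : V →ₗ[ℝ] V →ₗ[ℝ] W)
    (hsymm : ∀ X Y : V, β X Y = β Y X)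
    (hflat : ∀ X Y Z T : V, B (β X Y) (β Z T) = B (β X T) (β Z Y))
    (hn : 4 ≤ Module.finrank ℝ V)
    (hnull : LinearMap.ker β = ⊥) :
    Submodule.span ℝ {w : W | ∃ X Y : V, β X Y = w} ⊓
      B.orthogonal (Submodule.span ℝ {w : W | ∃ X Y : V, β X Y = w}) ≠ ⊥ := by
  classical
  set p : V →ₗ[ℝ] V →ₗ[ℝ] ℝ := β.compr₂ (e.coord 0) with hp_def
  set q : V →ₗ[ℝ] V →ₗ[ℝ] ℝ := β.compr₂ (e.coord 1) with hq_def
  have hpq : ∀ X Y, p X Y = e.repr (β X Y) 0 ∧ q X Y = e.repr (β X Y) 1 := by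
    intro X Y
    constructor <;> simp [hp_def, hq_def, LinearMap.compr₂_apply, Basis.coord_apply]
  have hβ : ∀ X Y, β X Y = p X Y • e 0 + q X Y • e 1 := by
    intro X Y
    have h := e.sum_repr (β X Y)
    rw [Fin.sum_univ_two] at h
    rw [(hpq X Y).1, (hpq X Y).2]
    exact h.symm
  have hBval : ∀ X Y Z T, B (β X Y) (β Z T)
      = -(p X Y * p Z T) + q X Y * q Z T := by
    intro X Y Z T
    rw [hβ X Y, hβ Z T]
    simp only [map_add, map_smul, LinearMap.add_apply, LinearMap.smul_apply,
      smul_eq_mul, he0, he1, he01, he10]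
    ring
  -- the coefficient forms in the null basis
  set a : V →ₗ[ℝ] V →ₗ[ℝ] ℝ := p + q with ha_def
  set b : V →ₗ[ℝ] V →ₗ[ℝ] ℝ := q - p with hb_def
  have hab : ∀ x y, a x y = p x y + q x y ∧ b x y = q x y - p x y := by
    intro x y
    constructor <;> simp [ha_def, hb_def]
  have hpsymm : ∀ x y, p x y = p y x := by
    intro x y; simp [hp_def, LinearMap.compr₂_apply, hsymm x y]
  have hqsymm : ∀ x y, q x y = q y x := by
    intro x y; simp [hq_def, LinearMap.compr₂_apply, hsymm x y]
  have hasymm : ∀ x y, a x y = a y x := by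
    intro x y; rw [(hab x y).1, (hab y x).1, hpsymm x y, hqsymm x y]
  have hbsymm' : ∀ x y, b x y = b y x := by
    intro x y; rw [(hab x y).2, (hab y x).2, hpsymm x y, hqsymm x y]
  have hEab : ∀ x z y t, a x y * b z t + b x y * a z t
      = a x t * b z y + b x t * a z y := by
    intro x z y t
    have h := hflat x y z t
    rw [hBval x y z t, hBval x t z y] at h
    rw [(hab x y).1, (hab x y).2, (hab z t).1, (hab z t).2,
      (hab x t).1, (hab x t).2, (hab z y).1, (hab z y).2]
    linear_combination 2 * h
  have hkerab : ∀ x, (∀ y, a x y = 0) → (∀ y, b x y = 0) → x = 0 := by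
    intro x hxa hxb
    have hβ0 : β x = 0 := by
      apply LinearMap.ext
      intro y
      have h1 := hxa y
      have h2 := hxb y
      rw [(hab x y).1] at h1
      rw [(hab x y).2] at h2
      have hp0 : p x y = 0 := by linarith
      have hq0 : q x y = 0 := by linarith
      rw [hβ x y, hp0, hq0]
      simp
    have : x ∈ LinearMap.ker β := LinearMap.mem_ker.mpr hβ0
    rw [hnull] at this
    exact (Submodule.mem_bot ℝ).mp this
  have hdich := keyLemma a b hasymm hbsymm' hEab hkerab hn
  -- total isotropy of the image
  have hiso : ∀ X Y Z T, B (β X Y) (β Z T) = 0 := by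
    intro X Y Z T
    rw [hBval X Y Z T]
    rcases hdich with h | h
    · have h1 := h X Y; have h2 := h Z T
      rw [(hab X Y).1] at h1
      rw [(hab Z T).1] at h2
      linear_combination q Z T * h1 - p X Y * h2
    · have h1 := h X Y; have h2 := h Z T
      rw [(hab X Y).2] at h1
      rw [(hab Z T).2] at h2
      linear_combination q Z T * h1 + p X Y * h2
  -- a nonzero value of β
  have : Nontrivial V := (Module.finrank_pos_iff (R := ℝ)).mp (by omega)
  obtain ⟨x₀, hx₀⟩ := exists_ne (0 : V)
  have hβx : β x₀ ≠ 0 := by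
    intro h
    apply hx₀
    have : x₀ ∈ LinearMap.ker β := LinearMap.mem_ker.mpr h
    rw [hnull] at this
    exact (Submodule.mem_bot ℝ).mp this
  obtain ⟨y₀, hy₀⟩ : ∃ y₀, β x₀ y₀ ≠ 0 := by
    by_contra h
    push_neg at h
    exact hβx (LinearMap.ext h)
  refine (Submodule.ne_bot_iff _).mpr ⟨β x₀ y₀, Submodule.mem_inf.mpr ⟨?_, ?_⟩, hy₀⟩
  · exact Submodule.subset_span ⟨x₀, y₀, rfl⟩
  · rw [LinearMap.BilinForm.mem_orthogonal_iff]
    intro n hn'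
    induction hn' using Submodule.span_induction with
    | mem w hw =>
      obtain ⟨X, Y, rfl⟩ := hw
      exact hiso X Y x₀ y₀
    | zero => simp
    | add u v hu hv ihu ihv => rw [map_add, LinearMap.add_apply, ihu, ihv, add_zero]
    | smul c u hu ihu => rw [map_smul, LinearMap.smul_apply, ihu, smul_zero]
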